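/- Let P be a set of five points of ℝ² with no three of them collinear. Then exactly one of the following holds: (i) the five points are in convex position; (ii) exactly one point of P lies in the interior of the convex hull of the other four, and those four are in convex position; (iii) exactly two points of P lie in the interior of the triangle spanned by the other three. -/

import Mathlib

noncomputable section

/-- The plane ℝ². -/
abbrev Plane := EuclideanSpace ℝ (Fin 2)

/-- No three points of the set `P` are collinear. -/
def NoThreeCollinearSet (P : Set Plane) : Prop :=
  ∀ x ∈ P, ∀ y ∈ P, ∀ z ∈ P, x ≠ y → x ≠ z → y ≠ z →
    ¬ Collinear ℝ ({x, y, z} : Set Plane)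

/-- The points of `P` are in convex position: no point of `P` lies in the convex hull
of the remaining ones. -/
def ConvexPositionSet (P : Set Plane) : Prop :=
  ∀ p ∈ P, p ∉ convexHull ℝ (P \ {p})

/-- Exactly one point of `P` lies in the interior of the convex hull of the other four,
and those four points are in convex position. -/
def OneInteriorPoint (P : Set Plane) : Prop :=
  ∃ p ∈ P, p ∈ interior (convexHull ℝ (P \ {p})) ∧
    (∀ q ∈ P, q ∈ interior (convexHull ℝ (P \ {q})) → q = p) ∧
    ConvexPositionSet (P \ {p})

/-- Exactly two points of `P` lie in the interior of the triangle spanned by the other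
three. -/
def TwoInteriorPoints (P : Set Plane) : Prop :=
  ∃ p ∈ P, ∃ q ∈ P, p ≠ q ∧
    p ∈ interior (convexHull ℝ (P \ {p, q})) ∧
    q ∈ interior (convexHull ℝ (P \ {p, q})) ∧
    ∀ r ∈ P, r ∈ interior (convexHull ℝ (P \ {p, q})) → r = p ∨ r = q

open Set


lemma hull_extend {X : Set Plane} {a : Plane} (h : a ∈ convexHull ℝ X) :
    convexHull ℝ (insert a X) = convexHull ℝ X :=
  subset_antisymm
    (convexHull_min (insert_subset h (subset_convexHull ℝ X)) (convex_convexHull ℝ X))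
    (convexHull_mono (subset_insert a X))

lemma absorb {S : Set Plane} {p q : Plane} (hpq : p ≠ q)
    (hp : p ∈ convexHull ℝ (insert q S)) (hq : q ∈ convexHull ℝ (insert p S)) :
    p ∈ convexHull ℝ S := by
  rcases S.eq_empty_or_nonempty with rfl | hS
  · simp only [insert_empty_eq, convexHull_singleton, mem_singleton_iff] at hp
    exact absurd hp hpq
  rw [convexHull_insert hS, mem_convexJoin] at hp hq
  obtain ⟨q1, hq1, u, hu, hpu⟩ := hp
  obtain ⟨p1, hp1, v, hv, hqv⟩ := hq
  rw [mem_singleton_iff] at hq1 hp1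
  rw [hq1] at hpu
  rw [hp1] at hqv
  obtain ⟨a, b, ha, hb, hab, hp'⟩ := hpu
  obtain ⟨c, d, hc, hd, hcd, hq'⟩ := hqv
  by_cases hac : a * c = 1
  · have ha1 : a = 1 := by nlinarith
    have hb0 : b = 0 := by linarith
    rw [ha1, hb0, one_smul, zero_smul, add_zero] at hp'
    exact absurd hp'.symm hpq
  · have haa : a ≤ 1 := by linarith
    have hcc : c ≤ 1 := by linarith
    have h1 : 0 < 1 - a * c := by
      rcases lt_or_eq_of_le (mul_le_one₀ haa hc hcc) with h | h
      · linarith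
      · exact absurd h hac

    have key : (1 - a * c) • p = (a * d) • v + b • u := by
      rw [← hq', smul_add, smul_smul, smul_smul] at hp'
      have h2 : ((a * c) • p + (a * d) • v + b • u) - (a * c) • p = p - (a * c) • p := by
        rw [hp']
      rw [sub_smul, one_smul, ← h2]
      abel
    have hp2 : ((a * d) / (1 - a * c)) • v + (b / (1 - a * c)) • u = p := by
      have h3 := congrArg (fun x : Plane => (1 - a * c)⁻¹ • x) key
      simp only [smul_smul, inv_mul_cancel₀ h1.ne', one_smul, smul_add] at h3
      rw [div_eq_inv_mul, div_eq_inv_mul]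
      exact h3.symm
    have hsum : (a * d) / (1 - a * c) + b / (1 - a * c) = 1 := by
      field_simp
      nlinarith
    have hseg : p ∈ segment ℝ v u :=
      ⟨_, _, div_nonneg (by positivity) h1.le, div_nonneg hb h1.le, hsum, hp2⟩
    exact (convex_convexHull ℝ S).segment_subset hv hu hseg

lemma pair_absorb {P : Set Plane} {x a : Plane} (hxa : x ≠ a)
    (hx : x ∈ convexHull ℝ (P \ {x})) (ha : a ∈ convexHull ℝ (P \ {a})) :
    x ∈ convexHull ℝ (P \ {a, x}) := by
  apply absorb hxa (q := a) (S := P \ {a, x})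
  · refine convexHull_mono (fun y hy => ?_) hx
    rcases eq_or_ne y a with rfl | hya
    · exact mem_insert _ _
    · exact mem_insert_of_mem _ ⟨hy.1, by
        simp [hya, show y ≠ x from fun h => hy.2 (by simp [h])]⟩
  · refine convexHull_mono (fun y hy => ?_) ha
    rcases eq_or_ne y x with rfl | hyx
    · exact mem_insert _ _
    · exact mem_insert_of_mem _ ⟨hy.1, by
        simp [hyx, show y ≠ a from fun h => hy.2 (by simp [h])]⟩

lemma hull_diff {F : Set Plane} (hF : F.Finite) :
    ∀ P : Set Plane, F ⊆ P → (∀ x ∈ F, x ∈ convexHull ℝ (P \ {x})) →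
      convexHull ℝ (P \ F) = convexHull ℝ P := by
  induction F, hF using Set.Finite.induction_on with
  | empty => intro P _ _; rw [diff_empty]
  | @insert a F haF hFfin ih =>
    intro P hFP hmem
    have haP : a ∈ P := hFP (mem_insert a F)
    have ha : a ∈ convexHull ℝ (P \ {a}) := hmem a (mem_insert a F)
    have h1 : ∀ x ∈ F, x ∈ convexHull ℝ ((P \ {a}) \ {x}) := by
      intro x hx
      have hxa : x ≠ a := fun h => haF (h ▸ hx)
      have := pair_absorb hxa (hmem x (mem_insert_of_mem a hx)) ha
      rwa [show P \ {a, x} = (P \ {a}) \ {x} by rw [diff_diff, singleton_union]] at this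
    have h2 : F ⊆ P \ {a} := fun x hx =>
      ⟨hFP (mem_insert_of_mem a hx), fun h => haF (h ▸ hx)⟩
    have h3 := ih (P \ {a}) h2 h1
    have h4 : (P \ {a}) \ F = P \ insert a F := by
      rw [diff_diff, singleton_union]
    have h5 : convexHull ℝ (P \ {a}) = convexHull ℝ P := by
      rw [← hull_extend ha, insert_diff_singleton, insert_eq_of_mem haP]
    rw [← h4, h3, h5]

lemma triangle_basis {x y z : Plane} (h : ¬ Collinear ℝ ({x, y, z} : Set Plane)) :
    ∃ b : AffineBasis (Fin 3) ℝ Plane, ⇑b = ![x, y, z] := by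
  have hind : AffineIndependent ℝ ![x, y, z] := affineIndependent_iff_not_collinear_set.mpr h
  have htot : affineSpan ℝ (Set.range ![x, y, z]) = ⊤ :=
    hind.affineSpan_eq_top_iff_card_eq_finrank_add_one.mpr
      (by simp [finrank_euclideanSpace_fin])
  exact ⟨⟨![x, y, z], hind, htot⟩, rfl⟩

lemma range_triple (x y z : Plane) : Set.range ![x, y, z] = ({x, y, z} : Set Plane) := by
  ext u
  constructor
  · rintro ⟨i, rfl⟩; fin_cases i <;> simp [Matrix.cons_val_zero, Matrix.cons_val_one]
  · rintro (rfl | rfl | rfl)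
    exacts [⟨0, rfl⟩, ⟨1, rfl⟩, ⟨2, rfl⟩]

lemma vertex_not_interior {x y z : Plane} (h : ¬ Collinear ℝ ({x, y, z} : Set Plane))
    {w : Plane} (hw : w ∈ ({x, y, z} : Set Plane)) :
    w ∉ interior (convexHull ℝ ({x, y, z} : Set Plane)) := by
  obtain ⟨b, hb⟩ := triangle_basis h
  have hrange : Set.range ⇑b = ({x, y, z} : Set Plane) := by rw [hb]; exact range_triple x y z
  rw [← hrange, b.interior_convexHull]
  rw [← hrange] at hw
  obtain ⟨j, rfl⟩ := hw
  obtain ⟨i, hij⟩ := exists_ne j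
  intro hmem
  have h0 : b.coord i (b j) = 0 := b.coord_apply_ne hij
  have := hmem i
  rw [h0] at this
  exact lt_irrefl 0 this

lemma mem_interior_of_triangle {x y z p : Plane} (h : ¬ Collinear ℝ ({x, y, z} : Set Plane))
    (hp : p ∈ convexHull ℝ ({x, y, z} : Set Plane))
    (hcol : ∀ u ∈ ({x, y, z} : Set Plane), ∀ v ∈ ({x, y, z} : Set Plane), u ≠ v →
      ¬ Collinear ℝ ({p, u, v} : Set Plane)) :
    p ∈ interior (convexHull ℝ ({x, y, z} : Set Plane)) := by
  obtain ⟨b, hb⟩ := triangle_basis h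
  have hrange : Set.range ⇑b = ({x, y, z} : Set Plane) := by rw [hb]; exact range_triple x y z
  rw [← hrange] at hp ⊢
  rw [b.interior_convexHull]
  have hnn : ∀ j, 0 ≤ b.coord j p := by
    rw [b.convexHull_eq_nonneg_coord] at hp; exact hp
  set w : Fin 3 → ℝ := fun j => b.coord j p with hwdef
  have hpsum : w 0 • b 0 + w 1 • b 1 + w 2 • b 2 = p := by
    have := b.linear_combination_coord_eq_self p
    rwa [Fin.sum_univ_three] at this
  have hsum3 : w 0 + w 1 + w 2 = 1 := by
    have := b.sum_coord_apply_eq_one p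
    rwa [Fin.sum_univ_three] at this
  have key : ∀ j k : Fin 3, j ≠ k → (w j • b j + w k • b k = p) → (w j + w k = 1) → False := by
    intro j k hjk hcomb hsum
    have hseg : p ∈ segment ℝ (b j) (b k) := ⟨w j, w k, hnn j, hnn k, hsum, hcomb⟩
    have hline : p ∈ affineSpan ℝ ({b j, b k} : Set Plane) :=
      convexHull_subset_affineSpan _ (by rw [convexHull_pair]; exact hseg)
    exact hcol (b j) (hrange ▸ Set.mem_range_self j) (b k) (hrange ▸ Set.mem_range_self k)
      (b.ind.injective.ne hjk) (collinear_insert_of_mem_affineSpan_pair hline)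
  intro i
  rcases (hnn i).lt_or_eq with hlt | heq
  · exact hlt
  exfalso
  have hwi : w i = 0 := heq.symm
  have h012 : ∀ m : Fin 3, m = 0 ∨ m = 1 ∨ m = 2 := by decide
  rcases h012 i with rfl | rfl | rfl
  · exact key 1 2 (by decide) (by rw [← hpsum, hwi]; simp) (by linarith)
  · exact key 0 2 (by decide) (by rw [← hpsum, hwi]; simp) (by linarith)
  · exact key 0 1 (by decide) (by rw [← hpsum, hwi]; simp) (by linarith)

lemma mem_interior_hull {S : Set Plane} {p : Plane} (hp : p ∈ convexHull ℝ S) (hpS : p ∉ S)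
    (hcol : ∀ u ∈ S, ∀ v ∈ S, u ≠ v → ¬ Collinear ℝ ({p, u, v} : Set Plane)) :
    p ∈ interior (convexHull ℝ S) := by
  classical
  rw [convexHull_eq_union] at hp
  simp only [Set.mem_iUnion] at hp
  obtain ⟨t, hts, htind, hpt⟩ := hp
  have hcard : t.card ≤ 3 := by
    have h := htind.card_le_finrank_succ
    have h2 := Submodule.finrank_le (vectorSpan ℝ (Set.range (Subtype.val : ↥t → Plane)))
    rw [finrank_euclideanSpace_fin] at h2
    rw [Fintype.card_coe] at h
    omega
  obtain h0 | h1 | h2 | h3 : t.card = 0 ∨ t.card = 1 ∨ t.card = 2 ∨ t.card = 3 := by omega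
  · rw [Finset.card_eq_zero] at h0
    subst h0
    simp at hpt
  · obtain ⟨a, rfl⟩ := Finset.card_eq_one.mp h1
    simp only [Finset.coe_singleton, convexHull_singleton, Set.mem_singleton_iff] at hpt
    exact absurd (hpt ▸ hts (by simp)) hpS
  · obtain ⟨a, c, hac, rfl⟩ := Finset.card_eq_two.mp h2
    have haS : a ∈ S := hts (by simp)
    have hcS : c ∈ S := hts (by simp)
    have : p ∈ affineSpan ℝ ({a, c} : Set Plane) := by
      apply convexHull_subset_affineSpan
      simpa using hpt
    exact absurd (collinear_insert_of_mem_affineSpan_pair this) (hcol a haS c hcS hac)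
  · obtain ⟨a, c, e, hac, hae, hce, rfl⟩ := Finset.card_eq_three.mp h3
    have hsub : ({a, c, e} : Set Plane) ⊆ S := by
      intro u hu
      apply hts
      simpa using hu
    have hfr : Module.finrank ℝ (vectorSpan ℝ (({a, c, e} : Finset Plane) : Set Plane)) = 2 := by
      have h := htind.finrank_vectorSpan (n := 2) (by simp [Fintype.card_coe, h3])
      have hr : Set.range (Subtype.val : ↥(({a, c, e} : Finset Plane)) → Plane)
          = (({a, c, e} : Finset Plane) : Set Plane) := Subtype.range_val
      rw [hr] at h
      exact h
    have hncol : ¬ Collinear ℝ ({a, c, e} : Set Plane) := by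
      intro hC
      have hC' : Collinear ℝ (({a, c, e} : Finset Plane) : Set Plane) := by
        simpa using hC
      have := hC'.finrank_le_one
      omega
    have hpt' : p ∈ convexHull ℝ ({a, c, e} : Set Plane) := by simpa using hpt
    have hint := mem_interior_of_triangle hncol hpt'
      (fun u hu v hv huv => hcol u (hsub hu) v (hsub hv) huv)
    exact interior_mono (convexHull_mono hsub) hint

lemma conv_not_one {P : Set Plane} (h : ConvexPositionSet P) : ¬ OneInteriorPoint P := by
  rintro ⟨p, hpP, hpint, -, -⟩
  exact h p hpP (interior_subset hpint)

lemma conv_not_two {P : Set Plane} (h : ConvexPositionSet P) : ¬ TwoInteriorPoints P := by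
  rintro ⟨p, hpP, q, hqP, hpq, hpint, -, -⟩
  have hsub : P \ {p, q} ⊆ P \ {p} := diff_subset_diff_right (by simp)
  exact h p hpP (convexHull_mono hsub (interior_subset hpint))

lemma one_not_two {P : Set Plane} (h : OneInteriorPoint P) : ¬ TwoInteriorPoints P := by
  obtain ⟨p₀, -, -, huniq, -⟩ := h
  rintro ⟨p, hpP, q, hqP, hpq, hpint, hqint, -⟩
  have h1 : P \ {p, q} ⊆ P \ {p} := diff_subset_diff_right (by simp)
  have h2 : P \ {p, q} ⊆ P \ {q} := diff_subset_diff_right (by simp)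
  have e1 := huniq p hpP (interior_mono (convexHull_mono h1) hpint)
  have e2 := huniq q hqP (interior_mono (convexHull_mono h2) hqint)
  exact hpq (e1.trans e2.symm)


/-- Trichotomy for five points in general position in the plane: exactly one of the
following holds: (i) the five points are in convex position; (ii) exactly one point lies
in the interior of the convex hull of the other four, which are in convex position;
(iii) exactly two points lie in the interior of the triangle spanned by the other
three. -/
theorem five_points_trichotomy
    (P : Set Plane) (hcard : P.ncard = 5) (hcol : NoThreeCollinearSet P) :
    (ConvexPositionSet P ∧ ¬ OneInteriorPoint P ∧ ¬ TwoInteriorPoints P) ∨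
    (¬ ConvexPositionSet P ∧ OneInteriorPoint P ∧ ¬ TwoInteriorPoints P) ∨
    (¬ ConvexPositionSet P ∧ ¬ OneInteriorPoint P ∧ TwoInteriorPoints P) := by
  classical
  have hPfin : P.Finite := Set.finite_of_ncard_ne_zero (by omega)
  set E := {p ∈ P | p ∉ convexHull ℝ (P \ {p})} with hEdef
  have hEP : E ⊆ P := fun x hx => hx.1
  have hEfin : E.Finite := hPfin.subset hEP
  have hmemE : ∀ x ∈ P \ E, x ∈ convexHull ℝ (P \ {x}) := by
    intro x hx
    by_contra hc
    exact hx.2 ⟨hx.1, hc⟩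
  have hhullE : convexHull ℝ E = convexHull ℝ P := by
    have h1 : P \ (P \ E) = E := Set.diff_diff_cancel_left hEP
    rw [← h1]
    exact hull_diff (hPfin.diff (t := E)) P Set.diff_subset hmemE
  have hspanP : affineSpan ℝ P = ⊤ := by
    obtain ⟨T, hTP, hT3⟩ := Set.exists_subset_card_eq (s := P) (n := 3) (by omega)
    obtain ⟨x, y, z, hxy, hxz, hyz, rfl⟩ := Set.ncard_eq_three.mp hT3
    have hx : x ∈ P := hTP (by simp)
    have hy : y ∈ P := hTP (by simp)
    have hz : z ∈ P := hTP (by simp)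
    have hncol := hcol x hx y hy z hz hxy hxz hyz
    have hind : AffineIndependent ℝ ![x, y, z] :=
      affineIndependent_iff_not_collinear_set.mpr hncol
    have htop : affineSpan ℝ (Set.range ![x, y, z]) = ⊤ :=
      hind.affineSpan_eq_top_iff_card_eq_finrank_add_one.mpr
        (by simp [finrank_euclideanSpace_fin])
    rw [range_triple] at htop
    exact le_antisymm le_top (htop ▸ affineSpan_mono ℝ hTP)
  have hspanE : affineSpan ℝ E = ⊤ := by
    rw [← affineSpan_convexHull, hhullE, affineSpan_convexHull, hspanP]
  have hE3 : 3 ≤ E.ncard := by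
    obtain ⟨t, htE, htspan, htind⟩ := exists_affineIndependent ℝ Plane E
    have htfin : t.Finite := finite_set_of_fin_dim_affineIndependent ℝ htind
    haveI := htfin.fintype
    have hrange : Set.range (Subtype.val : ↥t → Plane) = t := Subtype.range_val
    have hcardt : Fintype.card ↥t = 3 := by
      have h := htind.affineSpan_eq_top_iff_card_eq_finrank_add_one.mp
        (by rw [hrange, htspan, hspanE])
      rw [h, finrank_euclideanSpace_fin]
    have ht3 : t.ncard = 3 := by
      rw [← Nat.card_coe_set_eq, Nat.card_eq_fintype_card, hcardt]
    calc 3 = t.ncard := ht3.symm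
    _ ≤ E.ncard := Set.ncard_le_ncard htE hEfin
  have hE5 : E.ncard ≤ 5 := hcard ▸ Set.ncard_le_ncard hEP hPfin
  have hdiffcard : (P \ E).ncard = 5 - E.ncard := by
    rw [Set.ncard_diff hEP hEfin, hcard]
  obtain h5 | h4 | h3 : E.ncard = 5 ∨ E.ncard = 4 ∨ E.ncard = 3 := by omega
  · -- convex position
    have hEeq : E = P := Set.eq_of_subset_of_ncard_le hEP (by omega) hPfin
    have hconv : ConvexPositionSet P := by
      intro p hp
      rw [← hEeq] at hp
      exact hp.2
    exact Or.inl ⟨hconv, conv_not_one hconv, conv_not_two hconv⟩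
  · -- one interior point
    have h1 : (P \ E).ncard = 1 := by omega
    obtain ⟨p, hp⟩ := Set.ncard_eq_one.mp h1
    have hpPE : p ∈ P \ E := by rw [hp]; exact Set.mem_singleton p
    have hpP : p ∈ P := hpPE.1
    have hphull : p ∈ convexHull ℝ (P \ {p}) := hmemE p hpPE
    have hpint : p ∈ interior (convexHull ℝ (P \ {p})) := by
      apply mem_interior_hull hphull (by simp)
      intro u hu v hv huv
      have hup : u ≠ p := by simpa using hu.2
      have hvp : v ≠ p := by simpa using hv.2
      exact hcol p hpP u hu.1 v hv.1 hup.symm hvp.symm huv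
    have hOne : OneInteriorPoint P := by
      refine ⟨p, hpP, hpint, ?_, ?_⟩
      · intro q hq hqint
        have hqhull : q ∈ convexHull ℝ (P \ {q}) := interior_subset hqint
        have hq2 : q ∈ P \ E := ⟨hq, fun hqE => hqE.2 hqhull⟩
        rw [hp] at hq2
        simpa using hq2
      · intro q hq
        have hqP : q ∈ P := hq.1
        have hqE : q ∈ E := by
          by_contra hc
          have hq2 : q ∈ P \ E := ⟨hqP, hc⟩
          rw [hp] at hq2
          exact (show q ≠ p by simpa using hq.2) (by simpa using hq2)
        intro hcon
        exact hqE.2 (convexHull_mono (Set.diff_subset_diff_left Set.diff_subset) hcon)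
    exact Or.inr (Or.inl ⟨fun hc => hc p hpP hphull, hOne, one_not_two hOne⟩)
  · -- two interior points
    have h2 : (P \ E).ncard = 2 := by omega
    obtain ⟨p, q, hpq, hPE⟩ := Set.ncard_eq_two.mp h2
    have hpPE : p ∈ P \ E := by rw [hPE]; exact Set.mem_insert p {q}
    have hqPE : q ∈ P \ E := by rw [hPE]; simp
    have hpP : p ∈ P := hpPE.1
    have hqP : q ∈ P := hqPE.1
    have hEeq : P \ {p, q} = E := by rw [← hPE]; exact Set.diff_diff_cancel_left hEP
    have hint : ∀ r ∈ P \ E, r ∈ interior (convexHull ℝ E) := by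
      intro r hr
      have hrE : r ∉ E := hr.2
      have hrhullE : r ∈ convexHull ℝ E := hhullE ▸ subset_convexHull ℝ P hr.1
      apply mem_interior_hull hrhullE hrE
      intro u hu v hv huv
      have hru : r ≠ u := fun h => hrE (h ▸ hu)
      have hrv : r ≠ v := fun h => hrE (h ▸ hv)
      exact hcol r hr.1 u (hEP hu) v (hEP hv) hru hrv huv
    have huniq : ∀ r ∈ P, r ∈ interior (convexHull ℝ (P \ {p, q})) → r = p ∨ r = q := by
      intro r hrP hrint
      by_contra hc
      push_neg at hc
      have hrE : r ∈ E := by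
        by_contra hrE
        have hr2 : r ∈ P \ E := ⟨hrP, hrE⟩
        rw [hPE] at hr2
        rcases hr2 with h | h
        · exact hc.1 h
        · exact hc.2 h
      obtain ⟨a, b2, c2, hab, hac2, hbc2, hEabc⟩ := Set.ncard_eq_three.mp h3
      have haP : a ∈ P := hEP (by rw [hEabc]; simp)
      have hbP : b2 ∈ P := hEP (by rw [hEabc]; simp)
      have hcP : c2 ∈ P := hEP (by rw [hEabc]; simp)
      have hncol : ¬ Collinear ℝ ({a, b2, c2} : Set Plane) :=
        hcol a haP b2 hbP c2 hcP hab hac2 hbc2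
      rw [hEeq, hEabc] at hrint
      exact vertex_not_interior hncol (by rw [← hEabc]; exact hrE) hrint
    have hTwo : TwoInteriorPoints P :=
      ⟨p, hpP, q, hqP, hpq, by rw [hEeq]; exact hint p hpPE,
        by rw [hEeq]; exact hint q hqPE, huniq⟩
    exact Or.inr (Or.inr ⟨fun hc => hc p hpP (hmemE p hpPE),
      fun h1 => one_not_two h1 hTwo, hTwo⟩)
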